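/- Naive weight accuracy (two-weight case with distinct coefficients): Let d_0, d_1 > 0 with d_0 + d_1 = 1, let C_0, C_1 > 0, p ≥ 1, and let τ, β_0, β_1 be positive functions of h with τ(h) = O(h^m), β_k(h) = a·h^{n1}·(1 + O(h)) with a > 0 and m > n1 ≥ 1. Define α_k = d_k·(1 + C_k·(τ/β_k)^p) and ω_k = α_k/(α_0 + α_1). Then ω_k − d_k = O(h^{p(m−n1)}) as h → 0⁺. -/

import Mathlib

lemma weno_aux (d0 d1 x0 x1 : ℝ) (hd0 : 0 < d0) (hd1 : 0 < d1)
    (hsum : d0 + d1 = 1) (hx0 : 0 ≤ x0) (hx1 : 0 ≤ x1) :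
    |d0 * (1 + x0) / (d0 * (1 + x0) + d1 * (1 + x1)) - d0| ≤ d0 * d1 * (x0 + x1) := by
  have hS1 : (1:ℝ) ≤ d0 * (1 + x0) + d1 * (1 + x1) := by nlinarith
  have hS0 : (0:ℝ) < d0 * (1 + x0) + d1 * (1 + x1) := by linarith
  have key : d0 * (1 + x0) / (d0 * (1 + x0) + d1 * (1 + x1)) - d0
      = d0 * d1 * (x0 - x1) / (d0 * (1 + x0) + d1 * (1 + x1)) := by
    field_simp
    linear_combination (-(1+x0))*hsum
  rw [key, abs_div, abs_of_pos hS0]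
  have h1 : |d0 * d1 * (x0 - x1)| ≤ d0 * d1 * (x0 + x1) := by
    rw [abs_mul, abs_of_pos (mul_pos hd0 hd1)]
    exact mul_le_mul_of_nonneg_left (abs_le.mpr ⟨by linarith, by linarith⟩)
      (le_of_lt (mul_pos hd0 hd1))
  exact le_trans (div_le_self (abs_nonneg _) hS1) h1

/-- Naive weight accuracy (CASE 1 of Lemma 3.1): with possibly distinct
coefficients `C_0 ≠ C_1` the normalized weights deviate from the linear weights
by the conventional order `O(h^(p(m-n1)))`. -/
theorem weno_naive_weight_accuracy
    (d0 d1 C0 C1 p a : ℝ) (m n1 : ℕ)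
    (τ β0 β1 : ℝ → ℝ)
    (hd0 : 0 < d0) (hd1 : 0 < d1) (hsum : d0 + d1 = 1)
    (hC0 : 0 < C0) (hC1 : 0 < C1) (hp : 1 ≤ p) (ha : 0 < a)
    (hn1 : 1 ≤ n1) (hm : n1 < m)
    (hpos : ∃ ε > 0, ∀ h ∈ Set.Ioo (0:ℝ) ε, 0 < τ h ∧ 0 < β0 h ∧ 0 < β1 h)
    (hτ : ∃ K > 0, ∃ ε > 0, ∀ h ∈ Set.Ioo (0:ℝ) ε, |τ h| ≤ K * h ^ m)
    (hβ0 : ∃ K > 0, ∃ ε > 0, ∀ h ∈ Set.Ioo (0:ℝ) ε,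
      |β0 h - a * h ^ n1| ≤ K * h ^ (n1 + 1))
    (hβ1 : ∃ K > 0, ∃ ε > 0, ∀ h ∈ Set.Ioo (0:ℝ) ε,
      |β1 h - a * h ^ n1| ≤ K * h ^ (n1 + 1)) :
    ∃ K > 0, ∃ ε > 0, ∀ h ∈ Set.Ioo (0:ℝ) ε,
      |d0 * (1 + C0 * (τ h / β0 h) ^ p) /
          (d0 * (1 + C0 * (τ h / β0 h) ^ p) + d1 * (1 + C1 * (τ h / β1 h) ^ p)) - d0|
        ≤ K * h ^ (p * ((m : ℝ) - (n1 : ℝ))) ∧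
      |d1 * (1 + C1 * (τ h / β1 h) ^ p) /
          (d0 * (1 + C0 * (τ h / β0 h) ^ p) + d1 * (1 + C1 * (τ h / β1 h) ^ p)) - d1|
        ≤ K * h ^ (p * ((m : ℝ) - (n1 : ℝ))) := by
  obtain ⟨εp, hεp, hposf⟩ := hpos
  obtain ⟨Kτ, hKτ, ετ, hετ, hτf⟩ := hτ
  obtain ⟨K0, hK0, ε0, hε0, hβ0f⟩ := hβ0
  obtain ⟨K1, hK1, ε1, hε1, hβ1f⟩ := hβ1
  set M : ℝ := 2 * Kτ / a with hM
  have hMpos : 0 < M := by positivity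
  refine ⟨d0 * d1 * (C0 + C1) * M ^ p, by positivity,
    min εp (min ετ (min ε0 (min ε1 (min (a / (2 * K0)) (a / (2 * K1)))))),
    by positivity, ?_⟩
  intro h hh
  obtain ⟨hh0, hhε⟩ := hh
  have l1 : h < εp := hhε.trans_le (min_le_left _ _)
  have t2 := hhε.trans_le (min_le_right _ _)
  have l2 : h < ετ := t2.trans_le (min_le_left _ _)
  have t3 := t2.trans_le (min_le_right _ _)
  have l3 : h < ε0 := t3.trans_le (min_le_left _ _)
  have t4 := t3.trans_le (min_le_right _ _)
  have l4 : h < ε1 := t4.trans_le (min_le_left _ _)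
  have t5 := t4.trans_le (min_le_right _ _)
  have l5 : h < a / (2 * K0) := t5.trans_le (min_le_left _ _)
  have l6 : h < a / (2 * K1) := t5.trans_le (min_le_right _ _)
  obtain ⟨hτpos, hβ0pos, hβ1pos⟩ := hposf h ⟨hh0, l1⟩
  have hK0h : K0 * h ≤ a / 2 := by
    rw [lt_div_iff₀ (by positivity)] at l5; nlinarith
  have hK1h : K1 * h ≤ a / 2 := by
    rw [lt_div_iff₀ (by positivity)] at l6; nlinarith
  have hpowpos : 0 < h ^ n1 := pow_pos hh0 n1
  have hβ0lb : a / 2 * h ^ n1 ≤ β0 h := by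
    have hb := (abs_le.mp (hβ0f h ⟨hh0, l3⟩)).1
    have he : K0 * h ^ (n1 + 1) ≤ a / 2 * h ^ n1 := by
      have hq : K0 * h ^ (n1 + 1) = (K0 * h) * h ^ n1 := by ring
      rw [hq]; exact mul_le_mul_of_nonneg_right hK0h hpowpos.le
    linarith
  have hβ1lb : a / 2 * h ^ n1 ≤ β1 h := by
    have hb := (abs_le.mp (hβ1f h ⟨hh0, l4⟩)).1
    have he : K1 * h ^ (n1 + 1) ≤ a / 2 * h ^ n1 := by
      have hq : K1 * h ^ (n1 + 1) = (K1 * h) * h ^ n1 := by ring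
      rw [hq]; exact mul_le_mul_of_nonneg_right hK1h hpowpos.le
    linarith
  have hτub : τ h ≤ Kτ * h ^ m := by
    have := hτf h ⟨hh0, l2⟩
    rwa [abs_of_pos hτpos] at this
  have hmsplit : h ^ m = h ^ n1 * h ^ (m - n1) := by
    rw [← pow_add]; congr 1; omega
  have hp0 : (0:ℝ) ≤ p := by linarith
  -- bound τ/β ≤ M * h^(m-n1)
  have hbd : ∀ β : ℝ, 0 < β → a / 2 * h ^ n1 ≤ β → τ h / β ≤ M * h ^ (m - n1) := by
    intro β hβ hβlb
    rw [div_le_iff₀ hβ]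
    calc τ h ≤ Kτ * h ^ m := hτub
      _ = (M * h ^ (m - n1)) * (a / 2 * h ^ n1) := by
          rw [hmsplit, hM]; field_simp
      _ ≤ (M * h ^ (m - n1)) * β := by
          exact mul_le_mul_of_nonneg_left hβlb (by positivity)
  have hpowid : ((h ^ (m - n1) : ℝ)) ^ p = h ^ (p * ((m : ℝ) - (n1 : ℝ))) := by
    rw [← Real.rpow_natCast h (m - n1), ← Real.rpow_mul hh0.le]
    congr 1
    push_cast [Nat.cast_sub hm.le]
    ring
  have hrp : ∀ β : ℝ, 0 < β → a / 2 * h ^ n1 ≤ β →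
      (τ h / β) ^ p ≤ M ^ p * h ^ (p * ((m : ℝ) - (n1 : ℝ))) := by
    intro β hβ hβlb
    have h1 : (τ h / β) ^ p ≤ (M * h ^ (m - n1)) ^ p :=
      Real.rpow_le_rpow (by positivity) (hbd β hβ hβlb) hp0
    rwa [Real.mul_rpow hMpos.le (by positivity), hpowid] at h1
  set H := h ^ (p * ((m : ℝ) - (n1 : ℝ))) with hH
  have hx0 : (0:ℝ) ≤ C0 * (τ h / β0 h) ^ p := by positivity
  have hx1 : (0:ℝ) ≤ C1 * (τ h / β1 h) ^ p := by positivity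
  have b0 : C0 * (τ h / β0 h) ^ p ≤ C0 * (M ^ p * H) :=
    mul_le_mul_of_nonneg_left (hrp _ hβ0pos hβ0lb) hC0.le
  have b1 : C1 * (τ h / β1 h) ^ p ≤ C1 * (M ^ p * H) :=
    mul_le_mul_of_nonneg_left (hrp _ hβ1pos hβ1lb) hC1.le
  constructor
  · calc |d0 * (1 + C0 * (τ h / β0 h) ^ p) /
        (d0 * (1 + C0 * (τ h / β0 h) ^ p) + d1 * (1 + C1 * (τ h / β1 h) ^ p)) - d0|
        ≤ d0 * d1 * (C0 * (τ h / β0 h) ^ p + C1 * (τ h / β1 h) ^ p) :=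
          weno_aux d0 d1 _ _ hd0 hd1 hsum hx0 hx1
      _ ≤ d0 * d1 * ((C0 + C1) * (M ^ p * H)) := by
          apply mul_le_mul_of_nonneg_left _ (by positivity)
          calc C0 * (τ h / β0 h) ^ p + C1 * (τ h / β1 h) ^ p
              ≤ C0 * (M ^ p * H) + C1 * (M ^ p * H) := add_le_add b0 b1
            _ = (C0 + C1) * (M ^ p * H) := by ring
      _ = d0 * d1 * (C0 + C1) * M ^ p * H := by ring
  · rw [show d0 * (1 + C0 * (τ h / β0 h) ^ p) + d1 * (1 + C1 * (τ h / β1 h) ^ p)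
        = d1 * (1 + C1 * (τ h / β1 h) ^ p) + d0 * (1 + C0 * (τ h / β0 h) ^ p)
        from add_comm _ _]
    calc |d1 * (1 + C1 * (τ h / β1 h) ^ p) /
        (d1 * (1 + C1 * (τ h / β1 h) ^ p) + d0 * (1 + C0 * (τ h / β0 h) ^ p)) - d1|
        ≤ d1 * d0 * (C1 * (τ h / β1 h) ^ p + C0 * (τ h / β0 h) ^ p) :=
          weno_aux d1 d0 _ _ hd1 hd0 (by linarith) hx1 hx0
      _ ≤ d1 * d0 * ((C0 + C1) * (M ^ p * H)) := by
          apply mul_le_mul_of_nonneg_left _ (by positivity)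
          calc C1 * (τ h / β1 h) ^ p + C0 * (τ h / β0 h) ^ p
              ≤ C1 * (M ^ p * H) + C0 * (M ^ p * H) := add_le_add b1 b0
            _ = (C0 + C1) * (M ^ p * H) := by ring
      _ = d0 * d1 * (C0 + C1) * M ^ p * H := by ring
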